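/- On the elliptic curve X over Q(s) obtained from y^2 + (t-2)xy - t(t-1)y = x^3 - t x^2 by the substitution t = -8s^2/(s^2-1), the two points with x-coordinate -4s^2(3s+1)(s-1)/(s^2-1)^2 and -4s^2(3s-1)(s+1)/(s^2-1)^2 (with y-coordinates chosen so the Weierstrass equation is satisfied) are 2-torsion points. -/

import Mathlib

open WeierstrassCurve

/-- The rational function `t = -8s²/(s² - 1)` in `ℚ(s)`. -/
noncomputable def tSub : RatFunc ℚ := -8 * RatFunc.X ^ 2 / (RatFunc.X ^ 2 - 1)

/-- The elliptic curve over `ℚ(s)` obtained from `y² + (t-2)xy - t(t-1)y = x³ - tx²`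
by the base change `t = -8s²/(s² - 1)`. -/
noncomputable def W16 : WeierstrassCurve.Affine (RatFunc ℚ) where
  a₁ := tSub - 2
  a₂ := -tSub
  a₃ := -(tSub * (tSub - 1))
  a₄ := 0
  a₆ := 0

lemma ratfunc_poly_ne (p : Polynomial ℚ) (h : p.eval 0 ≠ 0) :
    algebraMap (Polynomial ℚ) (RatFunc ℚ) p ≠ 0 :=
  RatFunc.algebraMap_ne_zero (fun hp => h (by rw [hp]; simp))

lemma ne_sub_one : (RatFunc.X - 1 : RatFunc ℚ) ≠ 0 := by
  have h : (RatFunc.X - 1 : RatFunc ℚ)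
      = algebraMap (Polynomial ℚ) _ (Polynomial.X - 1) := by
    simp [map_sub, RatFunc.algebraMap_X]
  rw [h]; exact ratfunc_poly_ne _ (by simp)

lemma ne_add_one : (RatFunc.X + 1 : RatFunc ℚ) ≠ 0 := by
  have h : (RatFunc.X + 1 : RatFunc ℚ)
      = algebraMap (Polynomial ℚ) _ (Polynomial.X + 1) := by
    simp [map_add, RatFunc.algebraMap_X]
  rw [h]; exact ratfunc_poly_ne _ (by simp)

lemma ne_three_add_one : (3 * RatFunc.X + 1 : RatFunc ℚ) ≠ 0 := by
  have h : (3 * RatFunc.X + 1 : RatFunc ℚ)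
      = algebraMap (Polynomial ℚ) _ (3 * Polynomial.X + 1) := by
    simp [map_add, map_mul, map_ofNat, RatFunc.algebraMap_X]
  rw [h]; exact ratfunc_poly_ne _ (by simp)

lemma ne_three_sub_one : (3 * RatFunc.X - 1 : RatFunc ℚ) ≠ 0 := by
  have h : (3 * RatFunc.X - 1 : RatFunc ℚ)
      = algebraMap (Polynomial ℚ) _ (3 * Polynomial.X - 1) := by
    simp [map_sub, map_mul, map_ofNat, RatFunc.algebraMap_X]
  rw [h]; exact ratfunc_poly_ne _ (by simp)

lemma ne_sq_sub_one : (RatFunc.X ^ 2 - 1 : RatFunc ℚ) ≠ 0 := by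
  have h : (RatFunc.X ^ 2 - 1 : RatFunc ℚ)
      = (RatFunc.X - 1) * (RatFunc.X + 1) := by ring
  rw [h]; exact mul_ne_zero ne_sub_one ne_add_one

lemma sixteen_ne : (16 : RatFunc ℚ) ≠ 0 := by
  have h : (16 : RatFunc ℚ) = algebraMap (Polynomial ℚ) _ (16 : Polynomial ℚ) := by
    simp [map_ofNat]
  rw [h]; exact ratfunc_poly_ne _ (by norm_num)

lemma sixtyfour_ne : (-64 : RatFunc ℚ) ≠ 0 := by
  have h : (-64 : RatFunc ℚ) = algebraMap (Polynomial ℚ) _ (-64 : Polynomial ℚ) := by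
    simp [map_neg, map_ofNat]
  rw [h]; exact ratfunc_poly_ne _ (by norm_num)

set_option maxHeartbeats 4000000 in
open Classical in
/-- On the base-changed curve `W16` over `ℚ(s)`, the two points with `x`-coordinates
`-4s²(3s+1)(s-1)/(s²-1)²` and `-4s²(3s-1)(s+1)/(s²-1)²` (with suitable `y`-coordinates)
are `2`-torsion points. -/
theorem base_change_two_torsion_sections :
    (∃ (y : RatFunc ℚ) (h : W16.Nonsingular
        (-4 * RatFunc.X ^ 2 * (3 * RatFunc.X + 1) * (RatFunc.X - 1) /
          (RatFunc.X ^ 2 - 1) ^ 2) y),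
      2 • WeierstrassCurve.Affine.Point.some _ _ h = 0) ∧
    (∃ (y : RatFunc ℚ) (h : W16.Nonsingular
        (-4 * RatFunc.X ^ 2 * (3 * RatFunc.X - 1) * (RatFunc.X + 1) /
          (RatFunc.X ^ 2 - 1) ^ 2) y),
      2 • WeierstrassCurve.Affine.Point.some _ _ h = 0) := by
  constructor
  · set x : RatFunc ℚ := -4 * RatFunc.X ^ 2 * (3 * RatFunc.X + 1) * (RatFunc.X - 1) /
      (RatFunc.X ^ 2 - 1) ^ 2 with hx
    set y : RatFunc ℚ := -8 * RatFunc.X ^ 3 * (3 * RatFunc.X + 1) /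
      ((RatFunc.X - 1) * (RatFunc.X + 1) ^ 3) with hy
    have hyneg : y = W16.negY x y := by
      simp only [WeierstrassCurve.Affine.negY, W16, tSub, hx, hy]
      field_simp [ne_sub_one, ne_add_one, ne_sq_sub_one]
      ring
    have hns : W16.Nonsingular x y := by
      rw [WeierstrassCurve.Affine.nonsingular_iff, WeierstrassCurve.Affine.equation_iff]
      constructor
      · have hS : W16.a₁ * x + W16.a₃ = -2 * y := by
          simp only [W16, tSub, hx, hy]
          field_simp [ne_sub_one, ne_add_one, ne_sq_sub_one]
          ring
        have hy2 : (-(y ^ 2) : RatFunc ℚ)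
            = -64 * RatFunc.X ^ 6 * (3 * RatFunc.X + 1) ^ 2 /
              ((RatFunc.X - 1) ^ 2 * (RatFunc.X + 1) ^ 6) := by
          rw [hy, div_pow, ← neg_div,
            div_eq_div_iff (pow_ne_zero 2 (mul_ne_zero ne_sub_one (pow_ne_zero 3 ne_add_one)))
              (mul_ne_zero (pow_ne_zero 2 ne_sub_one) (pow_ne_zero 6 ne_add_one))]
          ring
        have hR : x ^ 3 + W16.a₂ * x ^ 2 + W16.a₄ * x + W16.a₆
            = -64 * RatFunc.X ^ 6 * (3 * RatFunc.X + 1) ^ 2 /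
              ((RatFunc.X - 1) ^ 2 * (RatFunc.X + 1) ^ 6) := by
          simp only [W16, tSub, hx, hy]
          field_simp [ne_sub_one, ne_add_one, ne_sq_sub_one]
          ring
        rw [hR, ← hy2]
        linear_combination y * hS
      · left
        refine sub_ne_zero.mp ?_
        have key : W16.a₁ * y - (3 * x ^ 2 + 2 * W16.a₂ * x + W16.a₄)
            = 16 * RatFunc.X ^ 3 * (3 * RatFunc.X + 1) /
              ((RatFunc.X - 1) * (RatFunc.X + 1) ^ 4) := by
          simp only [W16, tSub, hx, hy]
          field_simp [ne_sub_one, ne_add_one, ne_sq_sub_one]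
          ring
        rw [key]
        exact div_ne_zero
          (mul_ne_zero (mul_ne_zero sixteen_ne (pow_ne_zero _ RatFunc.X_ne_zero))
            ne_three_add_one)
          (mul_ne_zero ne_sub_one (pow_ne_zero _ ne_add_one))
    exact ⟨y, hns, by rw [two_nsmul]; exact
      WeierstrassCurve.Affine.Point.add_self_of_Y_eq hyneg⟩
  · set x : RatFunc ℚ := -4 * RatFunc.X ^ 2 * (3 * RatFunc.X - 1) * (RatFunc.X + 1) /
      (RatFunc.X ^ 2 - 1) ^ 2 with hx
    set y : RatFunc ℚ := -8 * RatFunc.X ^ 3 * (3 * RatFunc.X - 1) /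
      ((RatFunc.X - 1) ^ 3 * (RatFunc.X + 1)) with hy
    have hyneg : y = W16.negY x y := by
      simp only [WeierstrassCurve.Affine.negY, W16, tSub, hx, hy]
      field_simp [ne_sub_one, ne_add_one, ne_sq_sub_one]
      ring
    have hns : W16.Nonsingular x y := by
      rw [WeierstrassCurve.Affine.nonsingular_iff, WeierstrassCurve.Affine.equation_iff]
      constructor
      · have hS : W16.a₁ * x + W16.a₃ = -2 * y := by
          simp only [W16, tSub, hx, hy]
          field_simp [ne_sub_one, ne_add_one, ne_sq_sub_one]
          ring
        have hy2 : (-(y ^ 2) : RatFunc ℚ)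
            = -64 * RatFunc.X ^ 6 * (3 * RatFunc.X - 1) ^ 2 /
              ((RatFunc.X - 1) ^ 6 * (RatFunc.X + 1) ^ 2) := by
          rw [hy, div_pow, ← neg_div,
            div_eq_div_iff (pow_ne_zero 2 (mul_ne_zero (pow_ne_zero 3 ne_sub_one) ne_add_one))
              (mul_ne_zero (pow_ne_zero 6 ne_sub_one) (pow_ne_zero 2 ne_add_one))]
          ring
        have hR : x ^ 3 + W16.a₂ * x ^ 2 + W16.a₄ * x + W16.a₆
            = -64 * RatFunc.X ^ 6 * (3 * RatFunc.X - 1) ^ 2 /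
              ((RatFunc.X - 1) ^ 6 * (RatFunc.X + 1) ^ 2) := by
          simp only [W16, tSub, hx, hy]
          field_simp [ne_sub_one, ne_add_one, ne_sq_sub_one]
          ring
        rw [hR, ← hy2]
        linear_combination y * hS
      · left
        refine sub_ne_zero.mp ?_
        have key : W16.a₁ * y - (3 * x ^ 2 + 2 * W16.a₂ * x + W16.a₄)
            = -(16 * RatFunc.X ^ 3 * (3 * RatFunc.X - 1)) /
              ((RatFunc.X - 1) ^ 4 * (RatFunc.X + 1)) := by
          simp only [W16, tSub, hx, hy]
          field_simp [ne_sub_one, ne_add_one, ne_sq_sub_one]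
          ring
        rw [key]
        refine div_ne_zero (neg_ne_zero.mpr ?_)
          (mul_ne_zero (pow_ne_zero _ ne_sub_one) ne_add_one)
        exact mul_ne_zero (mul_ne_zero sixteen_ne (pow_ne_zero _ RatFunc.X_ne_zero))
          ne_three_sub_one
    exact ⟨y, hns, by rw [two_nsmul]; exact
      WeierstrassCurve.Affine.Point.add_self_of_Y_eq hyneg⟩
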